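/- Existence and uniqueness of the effective affinity and stalling state (Theorems 'unitary' and 'characterization'): Assume in addition that the kernel of W_hid, viewed as a linear map ℝ^n → ℝ^n via v ↦ W_hid *ᵥ v, is one-dimensional, and that Q ≠ 0. Then for every real number q ≠ 0 and every function p' : Fin n → ℝ with p' i > 0 for all i and ∑ i, p' i = 1, the matrix (Matrix.diagonal p') * (M q)ᵀ * (Matrix.diagonal p')⁻¹ is a Markov jump-process generator (all off-diagonal entries nonnegative and every column summing to zero) if and only if q = Q and p' = p. -/

import Mathlib

open Matrix

private lemma sum_two' {n : ℕ} {a b : Fin n} (hab : a ≠ b) (f : Fin n → ℝ)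
    (hf : ∀ i, i ≠ a → i ≠ b → f i = 0) : ∑ i, f i = f a + f b := by
  classical
  rw [← Finset.sum_subset (Finset.subset_univ ({a, b} : Finset (Fin n)))]
  · rw [Finset.sum_pair hab]
  · intro x _ hx
    simp only [Finset.mem_insert, Finset.mem_singleton] at hx
    push_neg at hx
    exact hf x hx.1 hx.2

/-- Existence and uniqueness of the effective affinity and stalling state
(Theorems "unitary" and "characterization"). -/
theorem effective_affinity_unique {n : ℕ} (hn : 3 ≤ n)
    (W Whid : Matrix (Fin n) (Fin n) ℝ)
    (hW1 : ∀ i j, i ≠ j → 0 ≤ W i j)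
    (hW2 : ∀ j, ∑ i, W i j = 0)
    (a b : Fin n) (hab : a ≠ b)
    (hWab : 0 < W a b) (hWba : 0 < W b a)
    (hH1 : Whid a b = 0) (hH2 : Whid b a = 0)
    (hH3 : Whid a a = W a a + W b a)
    (hH4 : Whid b b = W b b + W a b)
    (hH5 : ∀ i j, ¬(i = a ∧ j = b) → ¬(i = b ∧ j = a) → ¬(i = a ∧ j = a) →
      ¬(i = b ∧ j = b) → Whid i j = W i j)
    (p : Fin n → ℝ) (hp1 : ∀ i, 0 < p i) (hp2 : ∑ i, p i = 1)
    (hp3 : Whid *ᵥ p = 0)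
    (M : ℝ → Matrix (Fin n) (Fin n) ℝ)
    (hM1 : ∀ q, M q a b = W a b * Real.exp (-q))
    (hM2 : ∀ q, M q b a = W b a * Real.exp q)
    (hM3 : ∀ q i j, ¬(i = a ∧ j = b) → ¬(i = b ∧ j = a) → M q i j = W i j)
    (hker : Module.finrank ℝ (LinearMap.ker Whid.mulVecLin) = 1)
    (hQ : Real.log (W a b * p b / (W b a * p a)) ≠ 0) :
    ∀ q : ℝ, q ≠ 0 → ∀ p' : Fin n → ℝ, (∀ i, 0 < p' i) → (∑ i, p' i = 1) →
      (((∀ i j, i ≠ j →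
          0 ≤ (Matrix.diagonal p' * (M q)ᵀ * (Matrix.diagonal p')⁻¹) i j) ∧
        (∀ j, ∑ i, (Matrix.diagonal p' * (M q)ᵀ * (Matrix.diagonal p')⁻¹) i j = 0))
        ↔ (q = Real.log (W a b * p b / (W b a * p a)) ∧ p' = p)) := by
  intro q hq p' hp'1 hp'2
  have hba : b ≠ a := hab.symm
  -- inverse of the diagonal matrix
  have hDinv : (Matrix.diagonal p')⁻¹ = Matrix.diagonal (fun i => (p' i)⁻¹) := by
    apply Matrix.inv_eq_right_inv
    rw [Matrix.diagonal_mul_diagonal]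
    have : (fun i => p' i * (p' i)⁻¹) = fun _ => (1 : ℝ) :=
      funext fun i => mul_inv_cancel₀ (hp'1 i).ne'
    rw [this, Matrix.diagonal_one]
  -- entries of the conjugated matrix
  have hG : ∀ i j, (Matrix.diagonal p' * (M q)ᵀ * (Matrix.diagonal p')⁻¹) i j
      = p' i * M q j i * (p' j)⁻¹ := by
    intro i j
    rw [hDinv, Matrix.mul_diagonal, Matrix.diagonal_mul, Matrix.transpose_apply]
  -- off-diagonal entries of M q are nonnegative
  have hMq_nonneg : ∀ i j, i ≠ j → 0 ≤ M q i j := by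
    intro i j hij
    by_cases h1 : i = a ∧ j = b
    · rw [h1.1, h1.2, hM1]
      exact mul_nonneg hWab.le (Real.exp_pos _).le
    by_cases h2 : i = b ∧ j = a
    · rw [h2.1, h2.2, hM2]
      exact mul_nonneg hWba.le (Real.exp_pos _).le
    · rw [hM3 q i j h1 h2]; exact hW1 i j hij
  -- the first condition always holds
  have hcond1 : ∀ i j, i ≠ j →
      0 ≤ (Matrix.diagonal p' * (M q)ᵀ * (Matrix.diagonal p')⁻¹) i j := by
    intro i j hij
    rw [hG]
    exact mul_nonneg (mul_nonneg (hp'1 i).le (hMq_nonneg j i (Ne.symm hij)))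
      (inv_nonneg.mpr (hp'1 j).le)
  -- column sums
  have hcol : ∀ j, (∑ i, (Matrix.diagonal p' * (M q)ᵀ * (Matrix.diagonal p')⁻¹) i j)
      = (p' j)⁻¹ * ∑ i, M q j i * p' i := by
    intro j
    rw [Finset.mul_sum]
    apply Finset.sum_congr rfl
    intro i _
    rw [hG]; ring
  -- the difference of rows of M q and Whid applied to p'
  have hdiff : ∀ j, ∑ i, (M q j i - Whid j i) * p' i =
      (if j = a then W a b * Real.exp (-q) * p' b - W b a * p' a
       else if j = b then W b a * Real.exp q * p' a - W a b * p' b else 0) := by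
    intro j
    by_cases hja : j = a
    · rw [hja, if_pos rfl, sum_two' hab]
      · rw [hM3 q a a (fun h => hab h.2) (fun h => hab h.1), hH3, hM1, hH1]
        ring
      · intro i hia hib
        rw [hM3 q a i (fun h => hib h.2) (fun h => hab h.1),
          hH5 a i (fun h => hib h.2) (fun h => hab h.1) (fun h => hia h.2)
            (fun h => hab h.1)]
        ring
    by_cases hjb : j = b
    · rw [hjb, if_neg hba, if_pos rfl, sum_two' hab]
      · rw [hM2, hH2, hM3 q b b (fun h => hba h.1) (fun h => hba h.2), hH4]
        ring
      · intro i hia hib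
        rw [hM3 q b i (fun h => hba h.1) (fun h => hia h.2),
          hH5 b i (fun h => hba h.1) (fun h => hia h.2) (fun h => hba h.1)
            (fun h => hib h.2)]
        ring
    · rw [if_neg hja, if_neg hjb]
      apply Finset.sum_eq_zero
      intro i _
      rw [hM3 q j i (fun h => hja h.1) (fun h => hjb h.1),
        hH5 j i (fun h => hja h.1) (fun h => hjb h.1) (fun h => hja h.1)
          (fun h => hjb h.1)]
      ring
  have hsplit : ∀ j, ∑ i, M q j i * p' i
      = (∑ i, Whid j i * p' i) + ∑ i, (M q j i - Whid j i) * p' i := by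
    intro j
    rw [← Finset.sum_add_distrib]
    apply Finset.sum_congr rfl
    intro i _; ring
  -- column sums of Whid are zero
  have key : ∀ i, ∑ j, Whid j i = ∑ j, W j i + ∑ j, (Whid j i - W j i) := by
    intro i
    rw [← Finset.sum_add_distrib]
    apply Finset.sum_congr rfl
    intro j _; ring
  have hHcol : ∀ i, ∑ j, Whid j i = 0 := by
    intro i
    by_cases hia : i = a
    · rw [hia, key a, hW2 a, sum_two' hab]
      · rw [hH3, hH2]; ring
      · intro j hja hjb
        rw [hH5 j a (fun h => hja h.1) (fun h => hjb h.1) (fun h => hja h.1)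
            (fun h => hjb h.1)]
        ring
    by_cases hib : i = b
    · rw [hib, key b, hW2 b, sum_two' hab]
      · rw [hH1, hH4]; ring
      · intro j hja hjb
        rw [hH5 j b (fun h => hja h.1) (fun h => hjb h.1) (fun h => hja h.1)
            (fun h => hjb h.1)]
        ring
    · rw [key i, hW2 i,
        Finset.sum_eq_zero (fun j _ => by
          rw [hH5 j i (fun h => hib h.2) (fun h => hia h.2) (fun h => hia h.2)
            (fun h => hib h.2)]
          ring)]
      ring
  -- sum over all rows of Whid *ᵥ v vanishes
  have hsum_Whid : ∀ v : Fin n → ℝ, ∑ j, ∑ i, Whid j i * v i = 0 := by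
    intro v
    rw [Finset.sum_comm]
    apply Finset.sum_eq_zero
    intro i _
    rw [← Finset.sum_mul, hHcol i, zero_mul]
  have hWp0 : ∀ j, ∑ i, Whid j i * p i = 0 := by
    intro j
    have := congrFun hp3 j
    simpa [Matrix.mulVec, dotProduct] using this
  constructor
  · -- forward: conditions imply q = Q and p' = p
    rintro ⟨-, h2⟩
    have hS0 : ∀ j, ∑ i, M q j i * p' i = 0 := by
      intro j
      have := h2 j
      rw [hcol j] at this
      rcases mul_eq_zero.mp this with h | h
      · exact absurd h (inv_ne_zero (hp'1 j).ne')
      · exact h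
    have hWp' : ∀ j, (∑ i, Whid j i * p' i) =
        -(if j = a then W a b * Real.exp (-q) * p' b - W b a * p' a
          else if j = b then W b a * Real.exp q * p' a - W a b * p' b else 0) := by
      intro j
      have := hS0 j
      rw [hsplit j, hdiff j] at this
      linarith
    -- summing gives the balance equation
    have hbal : (W a b * Real.exp (-q) * p' b - W b a * p' a)
        + (W b a * Real.exp q * p' a - W a b * p' b) = 0 := by
      have hsum := hsum_Whid p'
      have heq : ∑ j, (∑ i, Whid j i * p' i) =
          ∑ j, -(if j = a then W a b * Real.exp (-q) * p' b - W b a * p' a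
            else if j = b then W b a * Real.exp q * p' a - W a b * p' b else 0) :=
        Finset.sum_congr rfl (fun j _ => hWp' j)
      rw [hsum] at heq
      rw [sum_two' hab _ (fun i hia hib => by rw [if_neg hia, if_neg hib, neg_zero])]
        at heq
      rw [if_pos rfl, if_neg hba, if_pos rfl] at heq
      linarith
    set x := Real.exp q with hx
    have hxpos : 0 < x := Real.exp_pos q
    have hx0 : x ≠ 0 := hxpos.ne'
    have hxinv : Real.exp (-q) = x⁻¹ := Real.exp_neg q
    have hx1 : x ≠ 1 := fun h => hq ((Real.exp_eq_one_iff q).mp h)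
    have hxx : x * x⁻¹ = 1 := mul_inv_cancel₀ hx0
    rw [hxinv] at hbal
    -- derive W b a * p' a * x = W a b * p' b
    have hbal' : (x - 1) * (W b a * p' a * x - W a b * p' b) = 0 := by
      have h2' : (W a b * x⁻¹ * p' b - W b a * p' a
          + (W b a * x * p' a - W a b * p' b)) * x = 0 := by
        rw [hbal, zero_mul]
      have hexp : W a b * x⁻¹ * p' b * x = W a b * p' b := by
        field_simp
      linear_combination h2' - hexp
    have hkey : W b a * p' a * x = W a b * p' b := by
      rcases mul_eq_zero.mp hbal' with h | h
      · exact absurd (by linarith : x = 1) hx1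
      · linarith
    -- the two correction terms vanish
    have hda : W a b * Real.exp (-q) * p' b - W b a * p' a = 0 := by
      rw [hxinv]
      linear_combination (W b a * p' a) * hxx - x⁻¹ * hkey
    have hdb : W b a * x * p' a - W a b * p' b = 0 := by
      linarith [hkey]
    -- hence Whid *ᵥ p' = 0
    have hWp'0 : ∀ j, ∑ i, Whid j i * p' i = 0 := by
      intro j
      rw [hWp' j]
      by_cases hja : j = a
      · rw [if_pos hja, hda, neg_zero]
      by_cases hjb : j = b
      · rw [if_neg hja, if_pos hjb, hdb, neg_zero]
      · rw [if_neg hja, if_neg hjb, neg_zero]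
    -- kernel argument: p' = p
    have hpne : p ≠ 0 := fun h => (hp1 a).ne' (congrFun h a)
    have hpker : p ∈ LinearMap.ker Whid.mulVecLin := by
      rw [LinearMap.mem_ker, Matrix.mulVecLin_apply, hp3]
    have hp'ker : p' ∈ LinearMap.ker Whid.mulVecLin := by
      rw [LinearMap.mem_ker, Matrix.mulVecLin_apply]
      funext j
      simpa [Matrix.mulVec, dotProduct] using hWp'0 j
    have hspan : Submodule.span ℝ {p} = LinearMap.ker Whid.mulVecLin := by
      apply Submodule.eq_of_le_of_finrank_eq
      · rwa [Submodule.span_le, Set.singleton_subset_iff]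
      · rw [hker, finrank_span_singleton hpne]
    have hp'mem : p' ∈ Submodule.span ℝ {p} := hspan ▸ hp'ker
    obtain ⟨t, ht⟩ := Submodule.mem_span_singleton.mp hp'mem
    have ht1 : t = 1 := by
      have hts : ∑ i, (t • p) i = 1 := by rw [ht]; exact hp'2
      simp only [Pi.smul_apply, smul_eq_mul] at hts
      rw [← Finset.mul_sum, hp2, mul_one] at hts
      exact hts
    have hp'eq : p' = p := by rw [← ht, ht1, one_smul]
    refine ⟨?_, hp'eq⟩
    -- q = Q
    rw [hp'eq] at hkey
    have h0 : W b a * p a ≠ 0 := (mul_pos hWba (hp1 a)).ne'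
    have hexpq : Real.exp q = W a b * p b / (W b a * p a) := by
      rw [← hx, eq_div_iff h0]
      linarith [hkey]
    rw [← hexpq, Real.log_exp]
  · -- backward: q = Q and p' = p imply conditions
    rintro ⟨hqQ, hp'p⟩
    subst hp'p
    refine ⟨hcond1, ?_⟩
    intro j
    rw [hcol j]
    have ha0 : W b a * p' a ≠ 0 := (mul_pos hWba (hp'1 a)).ne'
    have hb0 : W a b * p' b ≠ 0 := (mul_pos hWab (hp'1 b)).ne'
    have harg : 0 < W a b * p' b / (W b a * p' a) :=
      div_pos (mul_pos hWab (hp'1 b)) (mul_pos hWba (hp'1 a))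
    have hexpQ : Real.exp q = W a b * p' b / (W b a * p' a) := by
      rw [hqQ]; exact Real.exp_log harg
    have hexpnQ : Real.exp (-q) = W b a * p' a / (W a b * p' b) := by
      rw [Real.exp_neg, hexpQ, inv_div]
    have hS0 : ∑ i, M q j i * p' i = 0 := by
      rw [hsplit j, hdiff j, hWp0 j, zero_add]
      by_cases hja : j = a
      · rw [if_pos hja, hexpnQ]
        field_simp
        rw [div_self (hp'1 b).ne']
        ring
      by_cases hjb : j = b
      · rw [if_neg hja, if_pos hjb, hexpQ]
        field_simp
        rw [div_self (hp'1 a).ne']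
        ring
      · rw [if_neg hja, if_neg hjb]
    rw [hS0, mul_zero]
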